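/- With the weak formulation of the alignment operator, the functions ψ(φ) = 1 and ψ(φ) = φ (on a lift) are collision invariants: ∫_{𝕋¹} Q_{AL}(f,f) ψ dφ = 0; and for ψ(φ) = φ², one has ∫_{𝕋¹} Q_{AL}(f,f) φ² dφ = -(1/4)∫∫_{|φ-φ*|<π/2} b(φ,φ*) f(φ) f(φ*) (φ-φ*)² dφ* dφ ≤ 0. -/
import Mathlib


open MeasureTheory Set

/-- Weak form of the alignment collision operator tested against `ψ`:
`∫∫_{|φ*-φ|<π/2} b f f* (ψ((φ+φ*)/2) - (ψ(φ)+ψ(φ*))/2)`. -/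
noncomputable def weakAL (b : ℝ → ℝ → ℝ) (f : ℝ → ℝ) (ψ : ℝ → ℝ) : ℝ :=
  ∫ φ in Ioc 0 (2*Real.pi), ∫ φs in Ioo (φ - Real.pi/2) (φ + Real.pi/2),
    b φ φs * f φ * f φs * (ψ ((φ + φs)/2) - (ψ φ + ψ φs)/2)
theorem stmt_15 (b : ℝ → ℝ → ℝ) (f : ℝ → ℝ)
    (hb_meas : Measurable (Function.uncurry b)) (hb_sym : ∀ x y, b x y = b y x)
    (hb_nonneg : ∀ x y, 0 ≤ b x y)
    (hf_meas : Measurable f) (hf_nonneg : ∀ x, 0 ≤ f x)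
    (hf_per : Function.Periodic f (2*Real.pi))
    (hf_int : IntegrableOn f (Ioc 0 (2*Real.pi))) :
    weakAL b f (fun _ => 1) = 0 ∧
    weakAL b f (fun x => x) = 0 ∧
    weakAL b f (fun x => x^2)
      = -(1/4) * (∫ φ in Ioc 0 (2*Real.pi), ∫ φs in Ioo (φ - Real.pi/2) (φ + Real.pi/2),
          b φ φs * f φ * f φs * (φ - φs)^2) ∧
    weakAL b f (fun x => x^2) ≤ 0 := by
  have h2 : weakAL b f (fun x => x^2)
      = -(1/4) * (∫ φ in Ioc 0 (2*Real.pi), ∫ φs in Ioo (φ - Real.pi/2) (φ + Real.pi/2),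
          b φ φs * f φ * f φs * (φ - φs)^2) := by
    unfold weakAL
    rw [← MeasureTheory.integral_const_mul]
    apply MeasureTheory.integral_congr_ae
    filter_upwards with φ
    rw [← MeasureTheory.integral_const_mul]
    apply MeasureTheory.integral_congr_ae
    filter_upwards with φs
    ring
  refine ⟨?_, ?_, h2, ?_⟩
  · unfold weakAL
    simp
  · unfold weakAL
    have : ∀ φ φs : ℝ, b φ φs * f φ * f φs * ((φ + φs)/2 - (φ + φs)/2) = 0 := by
      intro φ φs; ring
    simp only [this, MeasureTheory.integral_zero]
  · rw [h2]
    have : (0:ℝ) ≤ ∫ φ in Ioc 0 (2*Real.pi), ∫ φs in Ioo (φ - Real.pi/2) (φ + Real.pi/2),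
        b φ φs * f φ * f φs * (φ - φs)^2 := by
      apply MeasureTheory.integral_nonneg
      intro φ
      apply MeasureTheory.integral_nonneg
      intro φs
      exact mul_nonneg (mul_nonneg (mul_nonneg (hb_nonneg φ φs) (hf_nonneg φ)) (hf_nonneg φs)) (sq_nonneg _)
    nlinarith
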